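/- Let q and p be probability distributions on [n] such that p_i = α_i/N for positive integers α_1,…,α_n with Σ_{i=1}^n α_i = N. Partition [N] into consecutive blocks B_1,…,B_n with |B_i| = α_i (in order), and define the distribution q' on [N] by q'_j = q_i/α_i for every j ∈ B_i. Then for every integer k with 2 ≤ k ≤ n: ‖q − p‖_{A_k} = ‖q' − U_N‖_{A_k}. -/

import Mathlib

open Finset ProbabilityTheory MeasureTheory

/-- The probability mass that a function on `Fin n` assigns to the (0-indexed)
interval `[a, b)`. -/
noncomputable def intervalMass {n : ℕ} (q : Fin n → ℝ) (a b : ℕ) : ℝ :=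
  ∑ j ∈ Finset.univ.filter (fun j : Fin n => a ≤ (j : ℕ) ∧ (j : ℕ) < b), q j

/-- `q` is a probability distribution on `[n]` (identified with `Fin n`). -/
noncomputable def IsDist {n : ℕ} (q : Fin n → ℝ) : Prop := (∀ i, 0 ≤ q i) ∧ ∑ i, q i = 1

/-- The `A_k` distance between `p` and `q` on `Fin n`: the supremum, over all partitions of
`Fin n` into `k` consecutive intervals (described by their monotone sequence of boundary
points), of the sum of the discrepancies `|p(I) - q(I)|` over the intervals. -/
noncomputable def AkDist (n k : ℕ) (p q : Fin n → ℝ) : ℝ :=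
  sSup { x : ℝ | ∃ b : Fin (k + 1) → ℕ, Monotone b ∧ b 0 = 0 ∧ b (Fin.last k) = n ∧
    x = ∑ i : Fin k,
      |intervalMass p (b i.castSucc) (b i.succ) - intervalMass q (b i.castSucc) (b i.succ)| }

/-- The `L1` distance between two functions on `Fin n`. -/
noncomputable def L1Dist {n : ℕ} (p q : Fin n → ℝ) : ℝ := ∑ i, |p i - q i|

/-- The `L2` distance between two functions on `Fin n`. -/
noncomputable def L2Dist {n : ℕ} (p q : Fin n → ℝ) : ℝ := Real.sqrt (∑ i, (p i - q i) ^ 2)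

/-- The uniform distribution on `Fin n`. -/
noncomputable def unif (n : ℕ) : Fin n → ℝ := fun _ => 1 / n

/-- The probability that the `m`-fold product measure `q^{⊗m}` assigns to a set
`A ⊆ [n]^m` of sample sequences. -/
noncomputable def prodProb {n m : ℕ} (q : Fin n → ℝ) (A : Finset (Fin m → Fin n)) : ℝ :=
  ∑ x ∈ A, ∏ j, q (x j)

/-- The reduced distribution of `q` w.r.t. the partition of `Fin n` into `ℓ` consecutive
intervals of equal length `n / ℓ` (assuming `ℓ ∣ n`). -/
noncomputable def reducedDist {n : ℕ} (q : Fin n → ℝ) (ℓ : ℕ) : Fin ℓ → ℝ :=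
  fun i => intervalMass q ((i : ℕ) * (n / ℓ)) (((i : ℕ) + 1) * (n / ℓ))

/-- `p` is a `t`-piecewise degree-`d` function on `Fin n`: there is a partition of `Fin n`
into `t` consecutive intervals on each of which `p` agrees with a real polynomial of degree
at most `d`. -/
noncomputable def IsPiecewisePoly {n : ℕ} (t d : ℕ) (p : Fin n → ℝ) : Prop :=
  ∃ b : Fin (t + 1) → ℕ, Monotone b ∧ b 0 = 0 ∧ b (Fin.last t) = n ∧
    ∀ i : Fin t, ∃ P : Polynomial ℝ, P.degree ≤ (d : ℕ) ∧
      ∀ x : Fin n, b i.castSucc ≤ (x : ℕ) → (x : ℕ) < b i.succ → p x = P.eval ((x : ℕ) : ℝ)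

/-- `q` is `k`-flat: there is a partition of `Fin n` into `k` consecutive intervals
on each of which `q` is constant. -/
noncomputable def IsKFlat {n : ℕ} (k : ℕ) (q : Fin n → ℝ) : Prop :=
  ∃ b : Fin (k + 1) → ℕ, Monotone b ∧ b 0 = 0 ∧ b (Fin.last k) = n ∧
    ∀ i : Fin k, ∃ c : ℝ, ∀ x : Fin n, b i.castSucc ≤ (x : ℕ) → (x : ℕ) < b i.succ → q x = c

/-- The term `Discr(I)² / width(I)^{1/8}` for the interval `I = [a, b)` in `Fin n`, where
the discrepancy is `Discr(I) = |q(I) - U_n(I)|` and the width is `|I|/n` (relative to the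
uniform distribution `U_n`). -/
noncomputable def ssTerm {n : ℕ} (q : Fin n → ℝ) (a b : ℕ) : ℝ :=
  |intervalMass q a b - ((b - a : ℕ) : ℝ) / n| ^ 2 / (((b - a : ℕ) : ℝ) / n) ^ ((1 : ℝ) / 8)

/-- The squared scale-sensitive-`L2` distance between `q` and the uniform distribution
on `Fin n`, at scale `1/k`: the supremum, over all partitions of `Fin n` into consecutive
nonempty intervals each of width at most `1/k`, of `∑ Discr(I)² / width(I)^{1/8}`. -/
noncomputable def ssDistSq (n k : ℕ) (q : Fin n → ℝ) : ℝ :=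
  sSup { x : ℝ | ∃ r : ℕ, ∃ b : Fin (r + 1) → ℕ, StrictMono b ∧ b 0 = 0 ∧ b (Fin.last r) = n ∧
    (∀ i : Fin r, ((b i.succ - b i.castSucc : ℕ) : ℝ) / n ≤ 1 / k) ∧
    x = ∑ i : Fin r, ssTerm q (b i.castSucc) (b i.succ) }
noncomputable def Cum {M : ℕ} (h : Fin M → ℝ) (a : ℕ) : ℝ :=
  ∑ j ∈ Finset.univ.filter (fun j : Fin M => (j : ℕ) < a), h j

lemma cum_split {M : ℕ} (h : Fin M → ℝ) (a b : ℕ) (hab : a ≤ b) :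
    Cum h b = Cum h a + intervalMass h a b := by
  unfold Cum intervalMass
  rw [← Finset.sum_union]
  · apply Finset.sum_congr _ (fun _ _ => rfl)
    ext j; simp only [Finset.mem_union, Finset.mem_filter, Finset.mem_univ, true_and]; omega
  · rw [Finset.disjoint_filter]; intro j _ h1 h2; omega

lemma iM_sub {M : ℕ} (f g : Fin M → ℝ) (a b : ℕ) (hab : a ≤ b) :
    intervalMass f a b - intervalMass g a b =
      Cum (fun j => f j - g j) b - Cum (fun j => f j - g j) a := by
  rw [cum_split (fun j => f j - g j) a b hab]
  unfold intervalMass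
  rw [Finset.sum_sub_distrib]; ring

lemma card_filter_Ico {M : ℕ} (a b : ℕ) (hbM : b ≤ M) :
    (Finset.univ.filter (fun j : Fin M => a ≤ (j : ℕ) ∧ (j : ℕ) < b)).card = b - a := by
  rw [← Nat.card_Ico a b]
  refine Finset.card_bij (fun j _ => (j : ℕ)) ?_ ?_ ?_
  · intro j hj; simp only [Finset.mem_filter] at hj; simp [Finset.mem_Ico]; omega
  · intro j _ j' _ h; exact Fin.ext h
  · intro x hx; simp only [Finset.mem_Ico] at hx
    exact ⟨⟨x, by omega⟩, by simp; omega, rfl⟩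

lemma cum_block {M : ℕ} (h : Fin M → ℝ) (a b : ℕ) (hab : a ≤ b) (hbM : b ≤ M) (c : ℝ)
    (hc : ∀ j : Fin M, a ≤ (j : ℕ) → (j : ℕ) < b → h j = c) :
    Cum h b = Cum h a + ((b - a : ℕ) : ℝ) * c := by
  rw [cum_split h a b hab]
  congr 1
  unfold intervalMass
  rw [Finset.sum_congr rfl (fun j hj => by
    simp only [Finset.mem_filter] at hj; exact hc j hj.2.1 hj.2.2)]
  rw [Finset.sum_const, card_filter_Ico a b hbM, nsmul_eq_mul]

lemma abs_iM_sub_le {M : ℕ} (f g : Fin M → ℝ) (a b : ℕ) :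
    |intervalMass f a b - intervalMass g a b| ≤ ∑ j, |f j - g j| := by
  unfold intervalMass
  rw [← Finset.sum_sub_distrib]
  refine le_trans (Finset.abs_sum_le_sum_abs _ _) ?_
  exact Finset.sum_le_sum_of_subset_of_nonneg (Finset.filter_subset _ _)
    (fun j _ _ => abs_nonneg _)


def Sb (α : ℕ → ℕ) (n m : ℕ) : ℕ := ∑ t ∈ Finset.range (min m n), α t

lemma Sb_mono (α : ℕ → ℕ) (n : ℕ) : Monotone (Sb α n) := by
  intro a b hab
  exact Finset.sum_le_sum_of_subset (Finset.range_subset_range.2 (by omega))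

lemma Sb_zero (α : ℕ → ℕ) (n : ℕ) : Sb α n 0 = 0 := by simp [Sb]

lemma Sb_of_le (α : ℕ → ℕ) {n m : ℕ} (h : m ≤ n) :
    Sb α n m = ∑ t ∈ Finset.range m, α t := by
  simp [Sb, Nat.min_eq_left h]

lemma Sb_of_ge (α : ℕ → ℕ) {n m : ℕ} (h : n ≤ m) : Sb α n m = Sb α n n := by
  simp [Sb, Nat.min_eq_left (le_refl n), Nat.min_eq_right h]

lemma Sb_succ (α : ℕ → ℕ) {n m : ℕ} (h : m < n) :
    Sb α n (m + 1) = Sb α n m + α m := by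
  rw [Sb_of_le α h.le, Sb_of_le α h, Finset.sum_range_succ]

lemma Sb_strict (α : ℕ → ℕ) {n : ℕ} (hα : ∀ i < n, 0 < α i) {a b : ℕ}
    (hab : a < b) (hbn : b ≤ n) : Sb α n a < Sb α n b := by
  have h1 : Sb α n a + α a ≤ Sb α n b := by
    rw [← Sb_succ α (by omega)]; exact Sb_mono α n (by omega)
  have := hα a (by omega); omega

section Claims
variable {n N : ℕ} (α : ℕ → ℕ) (q p : Fin n → ℝ) (q' : Fin N → ℝ)
variable (hn : 1 ≤ n) (hα : ∀ i < n, 0 < α i) (hN : ∑ i ∈ Finset.range n, α i = N)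
variable (hpα : ∀ i : Fin n, p i = (α (i : ℕ) : ℝ) / N)
variable (hq' : ∀ (i : Fin n) (j : Fin N),
      ∑ t ∈ Finset.range (i : ℕ), α t ≤ (j : ℕ) →
      (j : ℕ) < ∑ t ∈ Finset.range ((i : ℕ) + 1), α t →
      q' j = q i / (α (i : ℕ) : ℝ))

include hn hα hN in
lemma Npos : 0 < N := by
  have := hα 0 (by omega)
  have : α 0 ≤ ∑ i ∈ Finset.range n, α i :=
    Finset.single_le_sum (fun i _ => Nat.zero_le _) (Finset.mem_range.2 (by omega))
  omega

lemma Sb_top (α : ℕ → ℕ) (hN : ∑ i ∈ Finset.range n, α i = N) : Sb α n n = N := by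
  rw [Sb_of_le α le_rfl]; exact hN

include hn hα hN hpα hq' in
lemma claim_one : ∀ m : ℕ,
    Cum (fun j : Fin N => q' j - unif N j) (Sb α n m) =
    Cum (fun j : Fin n => q j - p j) m := by
  have hN0 : 0 < N := Npos α hn hα hN
  intro m
  induction m with
  | zero => rw [Sb_zero]; unfold Cum; simp
  | succ m ih =>
    by_cases hm : m < n
    · have hblock : Cum (fun j : Fin N => q' j - unif N j) (Sb α n (m+1)) =
          Cum (fun j : Fin N => q' j - unif N j) (Sb α n m) +
          ((Sb α n (m+1) - Sb α n m : ℕ) : ℝ) * (q ⟨m, hm⟩ / (α m : ℝ) - 1 / N) := by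
        apply cum_block _ _ _ (Sb_mono α n (by omega))
        · rw [← Sb_top α hN]; exact Sb_mono α n hm
        · intro j hj1 hj2
          have := hq' ⟨m, hm⟩ j (by rwa [← Sb_of_le α hm.le]) (by rwa [← Sb_of_le α hm])
          simp only [unif, this]
      have hL : Cum (fun j : Fin n => q j - p j) (m+1) =
          Cum (fun j : Fin n => q j - p j) m + ((m + 1 - m : ℕ) : ℝ) * (q ⟨m, hm⟩ - p ⟨m, hm⟩) := by
        apply cum_block _ _ _ (by omega) hm
        intro j hj1 hj2
        have : j = ⟨m, hm⟩ := Fin.ext (by simp only [Fin.val_mk]; omega)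
        rw [this]
      rw [hblock, hL, ih, Sb_succ α hm]
      have hαm : (0:ℝ) < α m := by exact_mod_cast hα m hm
      have hNr : (0:ℝ) < N := by exact_mod_cast hN0
      rw [hpα ⟨m, hm⟩]
      simp only [Nat.add_sub_cancel_left, Nat.add_sub_cancel]
      push_cast
      field_simp
    · have h1 : Sb α n (m+1) = Sb α n m := by
        rw [Sb_of_ge α (le_of_not_gt hm), Sb_of_ge α (by omega : n ≤ m + 1)]
      have h2 : Cum (fun j : Fin n => q j - p j) (m+1) = Cum (fun j : Fin n => q j - p j) m := by
        unfold Cum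
        apply Finset.sum_congr _ (fun _ _ => rfl)
        ext j
        simp only [Finset.mem_filter, Finset.mem_univ, true_and]
        have := j.2
        omega
      rw [h1, h2, ih]

end Claims

noncomputable def DR {N : ℕ} (q' : Fin N → ℝ) (a : ℕ) : ℝ :=
  Cum (fun j => q' j - unif N j) a

noncomputable def DL {n : ℕ} (q p : Fin n → ℝ) (m : ℕ) : ℝ :=
  Cum (fun j => q j - p j) m

section Claims2
variable {n N : ℕ} (α : ℕ → ℕ) (q p : Fin n → ℝ) (q' : Fin N → ℝ)
variable (hn : 1 ≤ n) (hα : ∀ i < n, 0 < α i) (hN : ∑ i ∈ Finset.range n, α i = N)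
variable (hpα : ∀ i : Fin n, p i = (α (i : ℕ) : ℝ) / N)
variable (hq' : ∀ (i : Fin n) (j : Fin N),
      ∑ t ∈ Finset.range (i : ℕ), α t ≤ (j : ℕ) →
      (j : ℕ) < ∑ t ∈ Finset.range ((i : ℕ) + 1), α t →
      q' j = q i / (α (i : ℕ) : ℝ))

include hn hα hN hpα hq' in
lemma claim_one' : ∀ m : ℕ, DR q' (Sb α n m) = DL q p m :=
  claim_one α q p q' hn hα hN hpα hq'

include hN hq' in
lemma affine (m : ℕ) (hm : m < n) (t : ℕ) (h1 : Sb α n m ≤ t) (h2 : t ≤ Sb α n (m + 1)) :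
    DR q' t = DR q' (Sb α n m) +
      ((t : ℝ) - ((Sb α n m : ℕ) : ℝ)) * (q ⟨m, hm⟩ / (α m : ℝ) - 1 / N) := by
  have hb : t ≤ N := le_trans h2 (by rw [← Sb_top α hN]; exact Sb_mono α n hm)
  have hblk := cum_block (fun j : Fin N => q' j - unif N j) (Sb α n m) t h1 hb
      (q ⟨m, hm⟩ / (α m : ℝ) - 1 / N) ?_
  · unfold DR
    rw [hblk, Nat.cast_sub h1]
  · intro j hj1 hj2
    have := hq' ⟨m, hm⟩ j (by rwa [← Sb_of_le α hm.le])
      (by rw [← Sb_of_le α hm]; exact lt_of_lt_of_le hj2 h2)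
    simp only [unif, this]

lemma bdry_cases (hα : ∀ i < n, 0 < α i) (hN : ∑ i ∈ Finset.range n, α i = N)
    (v : ℕ) (hv : v ≤ N) :
    (∃ m, m ≤ n ∧ Sb α n m = v) ∨
    (∃ m, m < n ∧ Sb α n m < v ∧ v < Sb α n (m + 1)) := by
  set m := Nat.findGreatest (fun m => Sb α n m ≤ v) n with hm_def
  have hm_le : m ≤ n := Nat.findGreatest_le n
  have hm_spec : Sb α n m ≤ v :=
    Nat.findGreatest_spec (P := fun m => Sb α n m ≤ v) (Nat.zero_le n)
      (by show Sb α n 0 ≤ _; rw [Sb_zero]; omega)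
  by_cases heq : Sb α n m = v
  · exact Or.inl ⟨m, hm_le, heq⟩
  · right
    have hmn : m < n := by
      rcases eq_or_lt_of_le hm_le with h | h
      · exfalso
        apply heq
        have : Sb α n m = N := by rw [h]; exact Sb_top α hN
        omega
      · exact h
    refine ⟨m, hmn, lt_of_le_of_ne hm_spec heq, ?_⟩
    by_contra hle
    push_neg at hle
    exact Nat.findGreatest_is_greatest (Nat.lt_succ_self m) (by omega) hle

end Claims2

section Main
variable {n N : ℕ} (α : ℕ → ℕ) (q p : Fin n → ℝ) (q' : Fin N → ℝ)
variable (hn : 1 ≤ n) (hα : ∀ i < n, 0 < α i) (hN : ∑ i ∈ Finset.range n, α i = N)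
variable (hpα : ∀ i : Fin n, p i = (α (i : ℕ) : ℝ) / N)
variable (hq' : ∀ (i : Fin n) (j : Fin N),
      ∑ t ∈ Finset.range (i : ℕ), α t ≤ (j : ℕ) →
      (j : ℕ) < ∑ t ∈ Finset.range ((i : ℕ) + 1), α t →
      q' j = q i / (α (i : ℕ) : ℝ))

include hn hα hN hpα hq' in
lemma main_ge (k : ℕ) (cnt : ℕ) : ∀ b' : Fin (k + 1) → ℕ, Monotone b' → b' 0 = 0 →
    b' (Fin.last k) = N →
    ((Finset.univ.image b').filter (fun v => ¬ ∃ m, m ≤ n ∧ Sb α n m = v)).card ≤ cnt →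
    ∃ b : Fin (k + 1) → ℕ, Monotone b ∧ b 0 = 0 ∧ b (Fin.last k) = n ∧
      ∑ i : Fin k, |DR q' (b' i.succ) - DR q' (b' i.castSucc)| ≤
      ∑ i : Fin k, |DL q p (b i.succ) - DL q p (b i.castSucc)| := by
  induction cnt with
  | zero =>
    intro b' hmono h0 hlast hcard
    have hall : ∀ x, ∃ m, m ≤ n ∧ Sb α n m = b' x := by
      intro x
      by_contra hx
      have : b' x ∈ (Finset.univ.image b').filter
          (fun v => ¬ ∃ m, m ≤ n ∧ Sb α n m = v) := by
        simp only [Finset.mem_filter, Finset.mem_image]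
        exact ⟨⟨x, Finset.mem_univ x, rfl⟩, hx⟩
      have := Finset.card_pos.2 ⟨_, this⟩
      omega
    refine ⟨fun x => Nat.findGreatest (fun m => Sb α n m ≤ b' x) n, ?_, ?_, ?_, ?_⟩
    case _ =>
      intro x y hxy
      apply Nat.le_findGreatest (Nat.findGreatest_le n)
      calc Sb α n (Nat.findGreatest (fun m => Sb α n m ≤ b' x) n) ≤ b' x :=
            Nat.findGreatest_spec (P := fun m => Sb α n m ≤ b' x) (Nat.zero_le n)
              (by show Sb α n 0 ≤ _; rw [Sb_zero]; omega)
        _ ≤ b' y := hmono hxy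
    case _ =>
      have hSb0 : Sb α n (Nat.findGreatest (fun m => Sb α n m ≤ b' 0) n) ≤ b' 0 :=
        Nat.findGreatest_spec (P := fun m => Sb α n m ≤ b' 0) (Nat.zero_le n)
          (by show Sb α n 0 ≤ _; rw [Sb_zero]; omega)
      by_contra hne
      have hpos : 0 < Nat.findGreatest (fun m => Sb α n m ≤ b' 0) n := Nat.pos_of_ne_zero hne
      have := Sb_strict α hα hpos (Nat.findGreatest_le n)
      rw [Sb_zero] at this
      omega
    case _ =>
      refine le_antisymm (Nat.findGreatest_le n) (Nat.le_findGreatest le_rfl ?_)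
      show Sb α n n ≤ b' (Fin.last k)
      rw [Sb_top α hN, hlast]
    case _ =>
      have hSb : ∀ x, Sb α n (Nat.findGreatest (fun m => Sb α n m ≤ b' x) n) = b' x := by
        intro x
        obtain ⟨m, hm, hSm⟩ := hall x
        have h1 : Sb α n (Nat.findGreatest (fun m => Sb α n m ≤ b' x) n) ≤ b' x :=
          Nat.findGreatest_spec (P := fun m => Sb α n m ≤ b' x) (Nat.zero_le n)
            (by show Sb α n 0 ≤ _; rw [Sb_zero]; omega)
        have h2 : m ≤ Nat.findGreatest (fun m => Sb α n m ≤ b' x) n :=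
          Nat.le_findGreatest hm (le_of_eq hSm)
        have h3 := Sb_mono α n h2
        omega
      have hterm : ∀ x, DR q' (b' x) =
          DL q p (Nat.findGreatest (fun m => Sb α n m ≤ b' x) n) := by
        intro x
        have := claim_one' α q p q' hn hα hN hpα hq'
          (Nat.findGreatest (fun m => Sb α n m ≤ b' x) n)
        rw [hSb x] at this
        exact this.symm ▸ this
      apply le_of_eq
      apply Finset.sum_congr rfl
      intro i _
      rw [hterm i.succ, hterm i.castSucc]
  | succ cnt ih =>
    intro b' hmono h0 hlast hcard
    by_cases hc : ((Finset.univ.image b').filter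
        (fun v => ¬ ∃ m, m ≤ n ∧ Sb α n m = v)).card ≤ cnt
    · exact ih b' hmono h0 hlast hc
    have hne : ((Finset.univ.image b').filter
        (fun v => ¬ ∃ m, m ≤ n ∧ Sb α n m = v)).Nonempty := Finset.card_pos.1 (by omega)
    obtain ⟨v, hv⟩ := hne
    have hv' := hv
    rw [Finset.mem_filter, Finset.mem_image] at hv'
    obtain ⟨⟨x0, -, hx0⟩, hvbad⟩ := hv'
    have hbN : ∀ x, b' x ≤ N := fun x => hlast ▸ hmono (Fin.le_last x)
    have hvN : v ≤ N := hx0 ▸ hbN x0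
    rcases bdry_cases α hα hN v hvN with hb | ⟨m, hmn, h1v, h2v⟩
    · exact absurd hb hvbad
    have hlowne : (insert (Sb α n m)
        ((Finset.univ.filter (fun x => b' x < v)).image b')).Nonempty :=
      ⟨_, Finset.mem_insert_self _ _⟩
    set Q := (insert (Sb α n m)
        ((Finset.univ.filter (fun x => b' x < v)).image b')).max' hlowne with hQdef
    have hupne : (insert (Sb α n (m + 1))
        ((Finset.univ.filter (fun x => v < b' x)).image b')).Nonempty :=
      ⟨_, Finset.mem_insert_self _ _⟩
    set P := (insert (Sb α n (m + 1))
        ((Finset.univ.filter (fun x => v < b' x)).image b')).min' hupne with hPdef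
    have hSQ : Sb α n m ≤ Q := Finset.le_max' _ _ (Finset.mem_insert_self _ _)
    have hQv : Q < v := by
      rw [hQdef, Finset.max'_lt_iff]
      intro w hw
      rcases Finset.mem_insert.1 hw with h | h
      · omega
      · obtain ⟨y, hy, rfl⟩ := Finset.mem_image.1 h
        exact (Finset.mem_filter.1 hy).2
    have hlow : ∀ x, b' x < v → b' x ≤ Q := fun x hx =>
      Finset.le_max' _ _ (Finset.mem_insert_of_mem
        (Finset.mem_image.2 ⟨x, Finset.mem_filter.2 ⟨Finset.mem_univ x, hx⟩, rfl⟩))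
    have hPS : P ≤ Sb α n (m + 1) := Finset.min'_le _ _ (Finset.mem_insert_self _ _)
    have hvP : v < P := by
      rw [hPdef, Finset.lt_min'_iff]
      intro w hw
      rcases Finset.mem_insert.1 hw with h | h
      · omega
      · obtain ⟨y, hy, rfl⟩ := Finset.mem_image.1 h
        exact (Finset.mem_filter.1 hy).2
    have hup : ∀ x, v < b' x → P ≤ b' x := fun x hx =>
      Finset.min'_le _ _ (Finset.mem_insert_of_mem
        (Finset.mem_image.2 ⟨x, Finset.mem_filter.2 ⟨Finset.mem_univ x, hx⟩, rfl⟩))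
    have hSm1N : Sb α n (m + 1) ≤ N := by rw [← Sb_top α hN]; exact Sb_mono α n hmn
    have hPN : P ≤ N := hPS.trans hSm1N
    set δ := q ⟨m, hmn⟩ / (α m : ℝ) - 1 / N with hδdef
    set A := DR q' (Sb α n m) - ((Sb α n m : ℕ) : ℝ) * δ with hAdef
    have haff : ∀ t : ℕ, Sb α n m ≤ t → t ≤ Sb α n (m + 1) →
        DR q' t = A + (t : ℝ) * δ := by
      intro t ht1 ht2
      rw [affine α q q' hN hq' m hmn t ht1 ht2, hAdef]
      ring
    have hQPr : (Q : ℝ) < P := by exact_mod_cast lt_trans hQv hvP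
    have hden : (0 : ℝ) < (P : ℝ) - Q := by linarith
    set lam := ((P : ℝ) - v) / ((P : ℝ) - Q) with hlamdef
    have hvPr : (v : ℝ) < P := by exact_mod_cast hvP
    have hQvr : (Q : ℝ) < v := by exact_mod_cast hQv
    have hlam0 : 0 ≤ lam := div_nonneg (by linarith) hden.le
    have hlam1 : lam ≤ 1 := by rw [hlamdef, div_le_one hden]; linarith
    have hdne : (P : ℝ) - Q ≠ 0 := ne_of_gt hden
    have hconv : (v : ℝ) = lam * Q + (1 - lam) * P := by
      rw [hlamdef]
      field_simp
      ring
    set g : ℕ → Fin (k + 1) → ℕ := fun t x => if b' x = v then t else b' x with hgdef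
    set W : ℕ → ℝ :=
      fun t => ∑ i : Fin k, |DR q' (g t i.succ) - DR q' (g t i.castSucc)| with hWdef
    have hgv : g v = b' := by
      funext x
      simp only [hgdef]
      split
      · exact (by assumption : b' x = v).symm
      · rfl
    have hrep : ∀ (x : Fin (k + 1)) (t : ℕ), Q ≤ t → t ≤ P →
        DR q' (g t x) =
          (if b' x = v then A else DR q' (b' x)) + (if b' x = v then δ else 0) * t := by
      intro x t ht1 ht2
      by_cases hx : b' x = v
      · rw [if_pos hx, if_pos hx]
        have : g t x = t := by simp only [hgdef, if_pos hx]
        rw [this, haff t (hSQ.trans ht1) (ht2.trans hPS)]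
        ring
      · rw [if_neg hx, if_neg hx]
        have : g t x = b' x := by simp only [hgdef, if_neg hx]
        rw [this]
        ring
    have hQleP : Q ≤ P := (hQv.trans hvP).le
    have hkey : W v ≤ lam * W Q + (1 - lam) * W P := by
      rw [hWdef]
      simp only []
      rw [Finset.mul_sum, Finset.mul_sum, ← Finset.sum_add_distrib]
      apply Finset.sum_le_sum
      intro i _
      rw [hrep i.succ v hQv.le hvP.le, hrep i.castSucc v hQv.le hvP.le,
          hrep i.succ Q le_rfl hQleP, hrep i.castSucc Q le_rfl hQleP,
          hrep i.succ P hQleP le_rfl, hrep i.castSucc P hQleP le_rfl]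
      set au := if b' i.succ = v then A else DR q' (b' i.succ) with hau
      set aw := if b' i.castSucc = v then A else DR q' (b' i.castSucc) with haw
      set bu := if b' i.succ = v then δ else 0 with hbu
      set bw := if b' i.castSucc = v then δ else 0 with hbw
      have hrew : ∀ t : ℝ, au + bu * t - (aw + bw * t) = (au - aw) + (bu - bw) * t :=
        fun t => by ring
      rw [hrew, hrew, hrew]
      have h2 : (au - aw) + (bu - bw) * (v : ℝ) =
          lam * ((au - aw) + (bu - bw) * Q) + (1 - lam) * ((au - aw) + (bu - bw) * P) := by
        rw [hconv]; ring
      rw [h2]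
      calc |lam * ((au - aw) + (bu - bw) * (Q:ℝ)) + (1 - lam) * ((au - aw) + (bu - bw) * (P:ℝ))|
          ≤ |lam * ((au - aw) + (bu - bw) * (Q:ℝ))| +
            |(1 - lam) * ((au - aw) + (bu - bw) * (P:ℝ))| := abs_add_le _ _
        _ = lam * |(au - aw) + (bu - bw) * (Q:ℝ)| +
            (1 - lam) * |(au - aw) + (bu - bw) * (P:ℝ)| := by
            rw [abs_mul, abs_mul, abs_of_nonneg hlam0, abs_of_nonneg (show (0:ℝ) ≤ 1 - lam by linarith)]
    have hmax : W v ≤ max (W Q) (W P) := by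
      refine hkey.trans ?_
      have e1 : lam * W Q ≤ lam * max (W Q) (W P) :=
        mul_le_mul_of_nonneg_left (le_max_left _ _) hlam0
      have e2 : (1 - lam) * W P ≤ (1 - lam) * max (W Q) (W P) :=
        mul_le_mul_of_nonneg_left (le_max_right _ _) (by linarith)
      calc lam * W Q + (1 - lam) * W P
          ≤ lam * max (W Q) (W P) + (1 - lam) * max (W Q) (W P) := add_le_add e1 e2
        _ = max (W Q) (W P) := by ring
    set c := if W P ≤ W Q then Q else P with hcdef
    have hWc : W v ≤ W c := by
      rw [hcdef]
      split
      · exact hmax.trans_eq (max_eq_left (by assumption))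
      · exact hmax.trans_eq (max_eq_right (le_of_not_ge (by assumption)))
    have hcl : ∀ x, b' x < v → b' x ≤ c := by
      intro x hx
      rw [hcdef]; split
      · exact hlow x hx
      · exact (hlow x hx).trans hQleP
    have hcu : ∀ x, v < b' x → c ≤ b' x := by
      intro x hx
      rw [hcdef]; split
      · exact hQleP.trans (hup x hx)
      · exact hup x hx
    have hcv : c ≠ v := by rw [hcdef]; split <;> omega
    have hcmemb : (∃ mm, mm ≤ n ∧ Sb α n mm = c) ∨ c ∈ Finset.univ.image b' := by
      rw [hcdef]
      split
      · rcases Finset.mem_insert.1 (Finset.max'_mem _ hlowne) with h | h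
        · exact Or.inl ⟨m, hmn.le, h.symm⟩
        · exact Or.inr (Finset.image_subset_image (Finset.filter_subset _ _) h)
      · rcases Finset.mem_insert.1 (Finset.min'_mem _ hupne) with h | h
        · exact Or.inl ⟨m + 1, hmn, h.symm⟩
        · exact Or.inr (Finset.image_subset_image (Finset.filter_subset _ _) h)
    have hmono'' : Monotone (g c) := by
      intro x y hxy
      simp only [hgdef]
      by_cases hx : b' x = v <;> by_cases hy : b' y = v
      · rw [if_pos hx, if_pos hy]
      · rw [if_pos hx, if_neg hy]
        have : v ≤ b' y := hx ▸ hmono hxy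
        exact hcu y (lt_of_le_of_ne this (Ne.symm hy))
      · rw [if_neg hx, if_pos hy]
        have : b' x ≤ v := hy ▸ hmono hxy
        exact hcl x (lt_of_le_of_ne this hx)
      · rw [if_neg hx, if_neg hy]; exact hmono hxy
    have h0'' : g c 0 = 0 := by
      have h00 : b' 0 ≠ v := by rw [h0]; omega
      simp only [hgdef, if_neg h00, h0]
    have hvltN : v < N := lt_of_lt_of_le h2v hSm1N
    have hlast'' : g c (Fin.last k) = N := by
      have hNv : b' (Fin.last k) ≠ v := by rw [hlast]; omega
      simp only [hgdef, if_neg hNv, hlast]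
    have hsub : (Finset.univ.image (g c)).filter
          (fun w => ¬ ∃ mm, mm ≤ n ∧ Sb α n mm = w) ⊆
        ((Finset.univ.image b').filter (fun w => ¬ ∃ mm, mm ≤ n ∧ Sb α n mm = w)).erase v := by
      intro w hw
      rw [Finset.mem_filter, Finset.mem_image] at hw
      obtain ⟨⟨x, -, hx⟩, hwbad⟩ := hw
      rw [Finset.mem_erase, Finset.mem_filter]
      by_cases hxv : b' x = v
      · have hwc : w = c := by rw [← hx]; simp only [hgdef, if_pos hxv]
        subst hwc
        rcases hcmemb with hbdy | himg
        · exact absurd hbdy hwbad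
        · exact ⟨hcv, himg, hwbad⟩
      · have hwx : w = b' x := by rw [← hx]; simp only [hgdef, if_neg hxv]
        subst hwx
        exact ⟨hxv, Finset.mem_image_of_mem b' (Finset.mem_univ x), hwbad⟩
    have hcard'' : ((Finset.univ.image (g c)).filter
        (fun w => ¬ ∃ mm, mm ≤ n ∧ Sb α n mm = w)).card ≤ cnt := by
      have h1 := Finset.card_le_card hsub
      rw [Finset.card_erase_of_mem hv] at h1
      omega
    obtain ⟨b, hb1, hb2, hb3, hb4⟩ := ih (g c) hmono'' h0'' hlast'' hcard''
    refine ⟨b, hb1, hb2, hb3, ?_⟩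
    calc ∑ i : Fin k, |DR q' (b' i.succ) - DR q' (b' i.castSucc)|
        = W v := by rw [hWdef]; simp only [hgv]
      _ ≤ W c := hWc
      _ = ∑ i : Fin k, |DR q' (g c i.succ) - DR q' (g c i.castSucc)| := by rw [hWdef]
      _ ≤ _ := hb4


end Main

lemma sum_abs_iM_eq {M k : ℕ} (f g : Fin M → ℝ) (b : Fin (k + 1) → ℕ) (hb : Monotone b) :
    ∑ i : Fin k, |intervalMass f (b i.castSucc) (b i.succ) -
        intervalMass g (b i.castSucc) (b i.succ)| =
    ∑ i : Fin k, |Cum (fun j => f j - g j) (b i.succ) -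
        Cum (fun j => f j - g j) (b i.castSucc)| :=
  Finset.sum_congr rfl fun i _ => by
    rw [iM_sub f g _ _ (hb (Fin.castSucc_le_succ i))]

lemma AkSet_nonempty {M k : ℕ} (hk : 1 ≤ k) (f g : Fin M → ℝ) :
    { x : ℝ | ∃ b : Fin (k + 1) → ℕ, Monotone b ∧ b 0 = 0 ∧ b (Fin.last k) = M ∧
      x = ∑ i : Fin k, |intervalMass f (b i.castSucc) (b i.succ) -
        intervalMass g (b i.castSucc) (b i.succ)| }.Nonempty := by
  refine ⟨_, ⟨fun i => if (i : ℕ) = 0 then 0 else M, ?_, ?_, ?_, rfl⟩⟩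
  · intro x y hxy
    have hv : (x : ℕ) ≤ (y : ℕ) := hxy
    dsimp only
    split_ifs <;> omega
  · simp
  · have h : ((Fin.last k : Fin (k + 1)) : ℕ) = k := rfl
    simp only [h]
    rw [if_neg (by omega)]

lemma AkSet_bdd {M k : ℕ} (f g : Fin M → ℝ) :
    BddAbove { x : ℝ | ∃ b : Fin (k + 1) → ℕ, Monotone b ∧ b 0 = 0 ∧ b (Fin.last k) = M ∧
      x = ∑ i : Fin k, |intervalMass f (b i.castSucc) (b i.succ) -
        intervalMass g (b i.castSucc) (b i.succ)| } := by
  refine ⟨(k : ℝ) * ∑ j, |f j - g j|, ?_⟩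
  rintro x ⟨b, -, -, -, rfl⟩
  calc ∑ i : Fin k, |intervalMass f (b i.castSucc) (b i.succ) -
          intervalMass g (b i.castSucc) (b i.succ)|
      ≤ ∑ _i : Fin k, ∑ j, |f j - g j| :=
        Finset.sum_le_sum fun i _ => abs_iM_sub_le f g _ _
    _ = (k : ℝ) * ∑ j, |f j - g j| := by
        rw [Finset.sum_const, Finset.card_univ, Fintype.card_fin, nsmul_eq_mul]


/-- **The identity-to-uniformity reduction preserves the `A_k` distance.**
Let `p i = αᵢ/N` with positive integers `αᵢ` summing to `N`, and let `q'` on `[N]` spread the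
mass `q i` uniformly over the `i`-th consecutive block of `αᵢ` points. Then
`‖q - p‖_{A_k} = ‖q' - U_N‖_{A_k}`. -/
theorem identity_to_uniformity_reduction (n N k : ℕ) (hn : 1 ≤ n)
    (hk2 : 2 ≤ k) (hkn : k ≤ n)
    (α : ℕ → ℕ) (hα : ∀ i < n, 0 < α i) (hN : ∑ i ∈ Finset.range n, α i = N)
    (q p : Fin n → ℝ) (hq : IsDist q) (hp : IsDist p)
    (hpα : ∀ i : Fin n, p i = (α (i : ℕ) : ℝ) / N)
    (q' : Fin N → ℝ)
    (hq' : ∀ (i : Fin n) (j : Fin N),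
      ∑ t ∈ Finset.range (i : ℕ), α t ≤ (j : ℕ) →
      (j : ℕ) < ∑ t ∈ Finset.range ((i : ℕ) + 1), α t →
      q' j = q i / (α (i : ℕ) : ℝ)) :
    AkDist n k q p = AkDist N k q' (unif N) := by
  have hk1 : 1 ≤ k := by omega
  unfold AkDist
  apply le_antisymm
  · apply csSup_le (AkSet_nonempty hk1 q p)
    rintro x ⟨b, hb1, hb2, hb3, rfl⟩
    apply le_csSup (AkSet_bdd q' (unif N))
    have hmono' : Monotone (fun i => Sb α n (b i)) := fun x y hxy => Sb_mono α n (hb1 hxy)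
    refine ⟨fun i => Sb α n (b i), hmono', by simp only []; rw [hb2, Sb_zero], by simp only []; rw [hb3, Sb_top α hN], ?_⟩
    rw [sum_abs_iM_eq q p b hb1, sum_abs_iM_eq q' (unif N) _ hmono']
    refine (Finset.sum_congr rfl fun i _ => ?_).symm
    rw [claim_one α q p q' hn hα hN hpα hq' (b i.succ),
        claim_one α q p q' hn hα hN hpα hq' (b i.castSucc)]
  · apply csSup_le (AkSet_nonempty hk1 q' (unif N))
    rintro x ⟨b', hb1, hb2, hb3, rfl⟩
    obtain ⟨b, h1, h2, h3, h4⟩ := main_ge α q p q' hn hα hN hpα hq' k _ b' hb1 hb2 hb3 le_rfl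
    refine le_trans ?_ (le_csSup (AkSet_bdd q p) ⟨b, h1, h2, h3, rfl⟩)
    rw [sum_abs_iM_eq q' (unif N) b' hb1, sum_abs_iM_eq q p b h1]
    exact h4
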